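/- Let H be a finite-dimensional complex inner product space, let P_E and P_O be orthogonal projections on H with P_E + P_O = 1, let ψ, φ be unit vectors, and let p ∈ (0,1), q := 1 − p. Set Δ⁰ := p|ψ⟩⟨ψ| − q|φ⟩⟨φ| and M := |ψ⟩⟨ψ| + |φ⟩⟨φ|, and assume [Δ⁰, P_E] = 0. For ε ∈ ℝ set Δ^ε := Δ⁰ + ε M, Δ^ε_E := P_E Δ^ε P_E, Δ^ε_O := P_O Δ^ε P_O. Then 0 ≤ ½(‖Δ^ε‖₁ − ‖Δ^ε_E + Δ^ε_O‖₁) ≤ κ |ε|, where κ := ½(‖M‖₁ + ‖P_E M P_E + P_O M P_O‖₁) and ‖Y‖₁ = Tr √(Y† Y). -/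

import Mathlib

open Matrix
open scoped ComplexOrder Kronecker

/-- The trace norm `‖Y‖₁ = Tr √(Yᴴ Y)` of a complex matrix. -/
noncomputable def traceNorm {m : Type*} [Fintype m] [DecidableEq m]
    (Y : Matrix m m ℂ) : ℝ :=
  (((Matrix.posSemidef_conjTranspose_mul_self Y).1.eigenvectorUnitary : Matrix m m ℂ) *
    Matrix.diagonal (((↑) : ℝ → ℂ) ∘ (√·) ∘ (Matrix.posSemidef_conjTranspose_mul_self Y).1.eigenvalues) *
    (star (Matrix.posSemidef_conjTranspose_mul_self Y).1.eigenvectorUnitary : Matrix m m ℂ)).trace.re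

/-- The inner product `⟪x, y⟫ = ∑ i, conj (x i) * y i` on `m → ℂ`. -/
noncomputable def cinner {m : Type*} [Fintype m] (x y : m → ℂ) : ℂ := star x ⬝ᵥ y

/-- An orthogonal projection: a self-adjoint idempotent matrix. -/
def IsOrthoProj {m : Type*} [Fintype m] (P : Matrix m m ℂ) : Prop :=
  P.IsHermitian ∧ P * P = P

/-- An effect: an operator `S` with `0 ≤ S ≤ 1`. -/
def IsEffect {m : Type*} [Fintype m] [DecidableEq m] (S : Matrix m m ℂ) : Prop :=
  S.PosSemidef ∧ (1 - S).PosSemidef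

/-- The rank-one operator `|ψ⟩⟨ψ|`. -/
noncomputable def outer {m : Type*} (ψ : m → ℂ) : Matrix m m ℂ :=
  Matrix.vecMulVec ψ (star ψ)


namespace TNAux

variable {m : Type*} [Fintype m] [DecidableEq m]

open scoped MatrixOrder

lemma traceNorm_eq_sqrt (Y : Matrix m m ℂ) :
    traceNorm Y = (CFC.sqrt (Yᴴ * Y)).trace.re := by
  have h0 := (Matrix.posSemidef_conjTranspose_mul_self Y).nonneg
  rw [CFC.sqrt_eq_real_sqrt _ h0, cfcₙ_eq_cfc,
    IsHermitian.cfc_eq (Matrix.posSemidef_conjTranspose_mul_self Y).1]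
  simp [IsHermitian.cfc, Unitary.conjStarAlgAut_apply, traceNorm]

lemma diag_re_nonneg {M : Matrix m m ℂ} (hM : M.PosSemidef) (i : m) :
    0 ≤ (M i i).re := by
  have := hM.re_dotProduct_nonneg (Pi.single i 1)
  simpa [dotProduct, mulVec, Pi.single_apply] using this

lemma conj_mul_conj {U : Matrix m m ℂ} (hU2 : star U * U = 1) (d e : m → ℂ) :
    (U * diagonal d * star U) * (U * diagonal e * star U)
      = U * diagonal (fun i => d i * e i) * star U := by
  rw [← diagonal_mul_diagonal]
  simp only [mul_assoc]
  congr 1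
  congr 1
  rw [← mul_assoc (star U) U, hU2, one_mul]

lemma diagonal_real_psd {d : m → ℝ} (hd : ∀ i, 0 ≤ d i) :
    PosSemidef (diagonal (fun i => (d i : ℂ))) := by
  rw [posSemidef_diagonal_iff]
  exact fun i => by exact_mod_cast hd i

/-- trace norm of `U D U*` with `D` real diagonal. -/
lemma traceNorm_unitary_diag {U A : Matrix m m ℂ}
    (hU1 : U * star U = 1) (hU2 : star U * U = 1) {d : m → ℝ}
    (hAspec : A = U * diagonal (fun i => (d i : ℂ)) * star U) :
    traceNorm A = ∑ i, |d i| := by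
  set B : Matrix m m ℂ := U * diagonal (fun i => ((|d i| : ℝ) : ℂ)) * star U with hBdef
  have hBpsd : B.PosSemidef := by
    simpa [hBdef, Matrix.star_eq_conjTranspose] using
      (diagonal_real_psd (fun i => abs_nonneg (d i))).mul_mul_conjTranspose_same U
  have hB2 : B ^ 2 = Aᴴ * A := by
    have hAh : Aᴴ = A := by
      rw [hAspec]
      simp only [conjTranspose_mul, conjTranspose_conjTranspose, star_eq_conjTranspose,
        diagonal_conjTranspose]
      rw [mul_assoc]
      congr 1
      congr 1
      ext i j
      simp [diagonal, Pi.star_apply, Complex.star_def, Complex.conj_ofReal]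
    rw [pow_two, hBdef, conj_mul_conj hU2, hAh, hAspec, conj_mul_conj hU2]
    have habs : (fun i => ((|d i| : ℝ) : ℂ) * ((|d i| : ℝ) : ℂ))
        = fun i => ((d i : ℝ) : ℂ) * ((d i : ℝ) : ℂ) := by
      funext i
      rw [← Complex.ofReal_mul, ← Complex.ofReal_mul, abs_mul_abs_self]
    rw [habs]
  have hBsqrt : B = CFC.sqrt (Aᴴ * A) :=
    ((CFC.sqrt_eq_iff _ _ (Matrix.posSemidef_conjTranspose_mul_self A).nonneg
      hBpsd.nonneg).mpr (by rw [← pow_two]; exact hB2)).symm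
  rw [traceNorm_eq_sqrt, ← hBsqrt, hBdef, trace_mul_cycle, hU2, one_mul, trace_diagonal]
  rw [show (∑ i, ((|d i| : ℝ) : ℂ)) = ((∑ i, |d i| : ℝ) : ℂ) by push_cast; rfl]
  exact Complex.ofReal_re _

lemma re_trace_mul_le_aux {U A : Matrix m m ℂ}
    (hU1 : U * star U = 1) (hU2 : star U * U = 1) {d : m → ℝ}
    (hAspec : A = U * diagonal (fun i => (d i : ℂ)) * star U)
    {S : Matrix m m ℂ} (hS1 : (1 - S).PosSemidef) (hS2 : (1 + S).PosSemidef) :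
    ((S * A).trace).re ≤ traceNorm A := by
  rw [traceNorm_unitary_diag hU1 hU2 hAspec]
  set T : Matrix m m ℂ := star U * S * U with hT
  have e1 : star U * (1 - S) * U = 1 - T := by
    rw [hT, Matrix.mul_sub, Matrix.sub_mul, mul_one, hU2]
  have e2 : star U * (1 + S) * U = 1 + T := by
    rw [hT, Matrix.mul_add, Matrix.add_mul, mul_one, hU2]
  have h1 : (1 - T).PosSemidef := by
    rw [← e1]
    simpa [Matrix.star_eq_conjTranspose] using hS1.conjTranspose_mul_mul_same U
  have h2 : (1 + T).PosSemidef := by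
    rw [← e2]
    simpa [Matrix.star_eq_conjTranspose] using hS2.conjTranspose_mul_mul_same U
  have hd : ∀ i, |(T i i).re| ≤ 1 := by
    intro i
    have a := diag_re_nonneg h1 i
    have b := diag_re_nonneg h2 i
    simp only [Matrix.sub_apply, Matrix.add_apply, Matrix.one_apply_eq, Complex.sub_re,
      Complex.add_re, Complex.one_re] at a b
    rw [abs_le]; constructor <;> linarith
  have htr : (S * A).trace = (T * diagonal (fun i => (d i : ℂ))).trace := by
    rw [hAspec, ← mul_assoc, ← mul_assoc, trace_mul_cycle, ← mul_assoc, hT]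
  rw [htr]
  have htr2 : (T * diagonal (fun i => (d i : ℂ))).trace = ∑ i, T i i * (d i : ℂ) := by
    simp [Matrix.trace, Matrix.diag, Matrix.mul_diagonal]
  rw [htr2, Complex.re_sum]
  apply Finset.sum_le_sum
  intro i _
  have hre : (T i i * (d i : ℂ)).re = (T i i).re * d i := by
    simp [Complex.mul_re]
  rw [hre]
  calc (T i i).re * d i ≤ |(T i i).re * d i| := le_abs_self _
    _ = |(T i i).re| * |d i| := abs_mul _ _
    _ ≤ 1 * |d i| := mul_le_mul_of_nonneg_right (hd i) (abs_nonneg _)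
    _ = _ := one_mul _

lemma exists_dual_aux {U A : Matrix m m ℂ}
    (hU1 : U * star U = 1) (hU2 : star U * U = 1) {d : m → ℝ}
    (hAspec : A = U * diagonal (fun i => (d i : ℂ)) * star U) :
    ∃ S : Matrix m m ℂ, (1 - S).PosSemidef ∧ (1 + S).PosSemidef ∧
      ((S * A).trace).re = traceNorm A := by
  set s : m → ℝ := fun i => if d i < 0 then -1 else 1 with hs
  refine ⟨U * diagonal (fun i => (s i : ℂ)) * star U, ?_, ?_, ?_⟩
  · have hD : diagonal (fun i => ((1 - s i : ℝ) : ℂ))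
        = 1 - diagonal (fun i => (s i : ℂ)) := by
      have h' : (fun i => ((1 - s i : ℝ) : ℂ)) = fun i => 1 - ((s i : ℝ) : ℂ) := by
        funext i; push_cast; ring
      rw [h', ← diagonal_sub, diagonal_one]
    have e : (1 : Matrix m m ℂ) - U * diagonal (fun i => (s i : ℂ)) * star U
        = U * diagonal (fun i => ((1 - s i : ℝ) : ℂ)) * star U := by
      rw [hD, Matrix.mul_sub, Matrix.sub_mul, mul_one, hU1]
    rw [e]
    have hnn : ∀ i, (0:ℝ) ≤ 1 - s i := by
      intro i; rw [hs]; dsimp only; split <;> norm_num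
    simpa [Matrix.star_eq_conjTranspose] using
      (diagonal_real_psd hnn).mul_mul_conjTranspose_same U
  · have hD : diagonal (fun i => ((1 + s i : ℝ) : ℂ))
        = 1 + diagonal (fun i => (s i : ℂ)) := by
      have h' : (fun i => ((1 + s i : ℝ) : ℂ)) = fun i => 1 + ((s i : ℝ) : ℂ) := by
        funext i; push_cast; ring
      rw [h', ← diagonal_add, diagonal_one]
    have e : (1 : Matrix m m ℂ) + U * diagonal (fun i => (s i : ℂ)) * star U
        = U * diagonal (fun i => ((1 + s i : ℝ) : ℂ)) * star U := by
      rw [hD, Matrix.mul_add, Matrix.add_mul, mul_one, hU1]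
    rw [e]
    have hnn : ∀ i, (0:ℝ) ≤ 1 + s i := by
      intro i; rw [hs]; dsimp only; split <;> norm_num
    simpa [Matrix.star_eq_conjTranspose] using
      (diagonal_real_psd hnn).mul_mul_conjTranspose_same U
  · rw [traceNorm_unitary_diag hU1 hU2 hAspec]
    rw [hAspec, conj_mul_conj hU2, trace_mul_cycle, hU2, one_mul, trace_diagonal]
    have key : ∀ i, (s i : ℂ) * (d i : ℂ) = ((|d i| : ℝ) : ℂ) := by
      intro i
      have hr : s i * d i = |d i| := by
        rw [hs]; dsimp only; split
        · rw [abs_of_neg ‹_›]; ring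
        · rw [abs_of_nonneg (not_lt.mp ‹_›)]; ring
      rw [← hr]; push_cast; ring
    simp_rw [key]
    rw [show (∑ i, ((|d i| : ℝ) : ℂ)) = ((∑ i, |d i| : ℝ) : ℂ) by push_cast; rfl]
    exact Complex.ofReal_re _

/-- Specialization to Hermitian matrices. -/
lemma spec_decomp {A : Matrix m m ℂ} (hA : A.IsHermitian) :
    A = (hA.eigenvectorUnitary : Matrix m m ℂ) *
        diagonal (fun i => ((hA.eigenvalues i : ℝ) : ℂ)) *
        star (hA.eigenvectorUnitary : Matrix m m ℂ) :=
  hA.spectral_theorem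

lemma traceNorm_eq_sum_abs {A : Matrix m m ℂ} (hA : A.IsHermitian) :
    traceNorm A = ∑ i, |hA.eigenvalues i| :=
  traceNorm_unitary_diag (mem_unitaryGroup_iff.mp hA.eigenvectorUnitary.2)
    (mem_unitaryGroup_iff'.mp hA.eigenvectorUnitary.2) (spec_decomp hA)

lemma traceNorm_nonneg {A : Matrix m m ℂ} (hA : A.IsHermitian) : 0 ≤ traceNorm A := by
  rw [traceNorm_eq_sum_abs hA]
  exact Finset.sum_nonneg fun i _ => abs_nonneg _

lemma re_trace_mul_le {A : Matrix m m ℂ} (hA : A.IsHermitian)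
    {S : Matrix m m ℂ} (hS1 : (1 - S).PosSemidef) (hS2 : (1 + S).PosSemidef) :
    ((S * A).trace).re ≤ traceNorm A :=
  re_trace_mul_le_aux (mem_unitaryGroup_iff.mp hA.eigenvectorUnitary.2)
    (mem_unitaryGroup_iff'.mp hA.eigenvectorUnitary.2) (spec_decomp hA) hS1 hS2

lemma exists_dual {A : Matrix m m ℂ} (hA : A.IsHermitian) :
    ∃ S : Matrix m m ℂ, (1 - S).PosSemidef ∧ (1 + S).PosSemidef ∧
      ((S * A).trace).re = traceNorm A :=
  exists_dual_aux (mem_unitaryGroup_iff.mp hA.eigenvectorUnitary.2)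
    (mem_unitaryGroup_iff'.mp hA.eigenvectorUnitary.2) (spec_decomp hA)

lemma traceNorm_triangle {A B : Matrix m m ℂ} (hA : A.IsHermitian) (hB : B.IsHermitian) :
    traceNorm (A + B) ≤ traceNorm A + traceNorm B := by
  obtain ⟨S, h1, h2, hS⟩ := exists_dual (hA.add hB)
  rw [← hS, Matrix.mul_add, trace_add, Complex.add_re]
  exact add_le_add (re_trace_mul_le hA h1 h2) (re_trace_mul_le hB h1 h2)

lemma posSemidef_real_smul {M : Matrix m m ℂ} (hM : M.PosSemidef) {c : ℝ} (hc : 0 ≤ c) :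
    ((c : ℂ) • M).PosSemidef := by
  exact hM.smul (Complex.zero_le_real.mpr hc)

set_option maxHeartbeats 2000000 in
lemma traceNorm_real_smul (c : ℝ) (Y : Matrix m m ℂ) :
    traceNorm ((c : ℂ) • Y) = |c| * traceNorm Y := by
  set B : Matrix m m ℂ := ((|c| : ℝ) : ℂ) • CFC.sqrt (Yᴴ * Y)
    with hBdef
  have hBpsd : B.PosSemidef :=
    posSemidef_real_smul (Matrix.nonneg_iff_posSemidef.mp (CFC.sqrt_nonneg _))
      (abs_nonneg c)
  have hB2 : B ^ 2 = ((c : ℂ) • Y)ᴴ * ((c : ℂ) • Y) := by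
    rw [hBdef, smul_pow, CFC.sq_sqrt (Yᴴ * Y) (Matrix.posSemidef_conjTranspose_mul_self Y).nonneg]
    rw [conjTranspose_smul, Matrix.smul_mul, Matrix.mul_smul, smul_smul]
    congr 1
    rw [Complex.star_def, Complex.conj_ofReal, ← Complex.ofReal_pow, ← Complex.ofReal_mul,
      sq_abs, sq]
  have hBsqrt : B = CFC.sqrt (((c : ℂ) • Y)ᴴ * ((c : ℂ) • Y)) :=
    ((CFC.sqrt_eq_iff _ _ (Matrix.posSemidef_conjTranspose_mul_self _).nonneg
      hBpsd.nonneg).mpr (by rw [← pow_two]; exact hB2)).symm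
  rw [traceNorm_eq_sqrt, ← hBsqrt, hBdef, trace_smul, smul_eq_mul, Complex.mul_re]
  rw [traceNorm_eq_sqrt Y, Complex.ofReal_re, Complex.ofReal_im]
  ring

lemma traceNorm_pinch_le {X P Q : Matrix m m ℂ} (hX : X.IsHermitian)
    (hP : P.IsHermitian) (hPP : P * P = P) (hQ : Q.IsHermitian) (hQQ : Q * Q = Q)
    (hPQ : P + Q = 1) :
    traceNorm (P * X * P + Q * X * Q) ≤ traceNorm X := by
  have hPXP : (P * X * P).IsHermitian := by
    have h := isHermitian_conjTranspose_mul_mul P hX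
    rwa [hP.eq] at h
  have hQXQ : (Q * X * Q).IsHermitian := by
    have h := isHermitian_conjTranspose_mul_mul Q hX
    rwa [hQ.eq] at h
  obtain ⟨S, h1, h2, hS⟩ := exists_dual (hPXP.add hQXQ)
  rw [← hS]
  have c1 : ∀ (Z : Matrix m m ℂ), (S * (Z * X * Z)).trace = (Z * S * Z * X).trace := by
    intro Z
    rw [show S * (Z * X * Z) = (S * Z * X) * Z by simp only [mul_assoc],
       trace_mul_comm, show Z * (S * Z * X) = Z * S * Z * X by simp only [mul_assoc]]
  have key : (S * (P * X * P + Q * X * Q)).trace = ((P * S * P + Q * S * Q) * X).trace := by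
    rw [Matrix.mul_add, trace_add, Matrix.add_mul, trace_add, c1 P, c1 Q]
  rw [key]
  have e1 : (1 : Matrix m m ℂ) - (P * S * P + Q * S * Q)
      = P * (1 - S) * P + Q * (1 - S) * Q := by
    simp only [Matrix.mul_sub, Matrix.sub_mul, Matrix.mul_one]
    rw [hPP, hQQ, ← hPQ]
    abel
  have e2 : (1 : Matrix m m ℂ) + (P * S * P + Q * S * Q)
      = P * (1 + S) * P + Q * (1 + S) * Q := by
    simp only [Matrix.mul_add, Matrix.add_mul, Matrix.mul_one]
    rw [hPP, hQQ, ← hPQ]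
    abel
  have h1' : ((1 : Matrix m m ℂ) - (P * S * P + Q * S * Q)).PosSemidef := by
    rw [e1]
    have a := h1.mul_mul_conjTranspose_same P
    have b := h1.mul_mul_conjTranspose_same Q
    rw [hP.eq] at a
    rw [hQ.eq] at b
    exact a.add b
  have h2' : ((1 : Matrix m m ℂ) + (P * S * P + Q * S * Q)).PosSemidef := by
    rw [e2]
    have a := h2.mul_mul_conjTranspose_same P
    have b := h2.mul_mul_conjTranspose_same Q
    rw [hP.eq] at a
    rw [hQ.eq] at b
    exact a.add b
  exact re_trace_mul_le hX h1' h2'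

end TNAux


section MainAux

variable {m : Type*} [Fintype m] [DecidableEq m]

namespace TNAux

lemma isHermitian_realSmul {A : Matrix m m ℂ} (h : A.IsHermitian) (c : ℝ) :
    ((c : ℂ) • A).IsHermitian := by
  unfold Matrix.IsHermitian at *
  rw [conjTranspose_smul, h]
  congr 1
  simp

omit [DecidableEq m] in
lemma outer_isHermitian (ψ : m → ℂ) : (outer ψ).IsHermitian := by
  unfold outer Matrix.IsHermitian
  ext i j
  simp [Matrix.conjTranspose_apply, Matrix.vecMulVec_apply, Pi.star_apply, mul_comm]

omit [DecidableEq m] in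
lemma herm_pinch_piece {P X : Matrix m m ℂ} (hP : P.IsHermitian) (hX : X.IsHermitian) :
    (P * X * P).IsHermitian := by
  have h := isHermitian_conjTranspose_mul_mul P hX
  rwa [hP.eq] at h

end TNAux

end MainAux

open TNAux in
/-- **Perturbation bound (Eq. (14)).** The gap between the optimal LOCC error and the
unconstrained Helstrom error for the perturbed prior is nonnegative and bounded by `κ|ε|`. -/
theorem locc_gap_perturbation_bound
    {n : ℕ} (P_E P_O : Matrix (Fin n) (Fin n) ℂ)
    (hPE : IsOrthoProj P_E) (hPO : IsOrthoProj P_O) (hsum : P_E + P_O = 1)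
    (ψ φ : Fin n → ℂ) (hψ : cinner ψ ψ = 1) (hφ : cinner φ φ = 1)
    (p q : ℝ) (hp : p ∈ Set.Ioo (0 : ℝ) 1) (hq : q = 1 - p)
    (Δ0 M : Matrix (Fin n) (Fin n) ℂ)
    (hΔ0 : Δ0 = (p : ℂ) • outer ψ - (q : ℂ) • outer φ)
    (hM : M = outer ψ + outer φ)
    (hcomm : Δ0 * P_E = P_E * Δ0)
    (ε : ℝ) (Δε : Matrix (Fin n) (Fin n) ℂ) (hΔε : Δε = Δ0 + (ε : ℂ) • M)
    (κ : ℝ)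
    (hκ : κ = (traceNorm M + traceNorm (P_E * M * P_E + P_O * M * P_O)) / 2) :
    0 ≤ (traceNorm Δε - traceNorm (P_E * Δε * P_E + P_O * Δε * P_O)) / 2 ∧
    (traceNorm Δε - traceNorm (P_E * Δε * P_E + P_O * Δε * P_O)) / 2 ≤ κ * |ε| := by
  have hMH : M.IsHermitian := by
    rw [hM]; exact (outer_isHermitian ψ).add (outer_isHermitian φ)
  have hΔ0H : Δ0.IsHermitian := by
    rw [hΔ0]
    exact (isHermitian_realSmul (outer_isHermitian ψ) p).sub
      (isHermitian_realSmul (outer_isHermitian φ) q)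
  have hΔεH : Δε.IsHermitian := by
    rw [hΔε]; exact hΔ0H.add (isHermitian_realSmul hMH ε)
  have hNH : (P_E * M * P_E + P_O * M * P_O).IsHermitian :=
    (herm_pinch_piece hPE.1 hMH).add (herm_pinch_piece hPO.1 hMH)
  have hO : P_O = 1 - P_E := eq_sub_of_add_eq' hsum
  have e1 : P_E * Δ0 * P_E = Δ0 * P_E := by
    rw [← hcomm, mul_assoc, hPE.2]
  have hpinch0 : P_E * Δ0 * P_E + P_O * Δ0 * P_O = Δ0 := by
    rw [hO]
    simp only [Matrix.sub_mul, Matrix.mul_sub, one_mul, mul_one]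
    rw [← hcomm, mul_assoc Δ0 P_E P_E, hPE.2]
    abel
  have hpinchε : P_E * Δε * P_E + P_O * Δε * P_O
      = Δ0 + (ε : ℂ) • (P_E * M * P_E + P_O * M * P_O) := by
    rw [hΔε]
    simp only [Matrix.mul_add, Matrix.add_mul, mul_smul_comm, smul_mul_assoc, smul_add]
    conv_rhs => rw [← hpinch0]
    abel
  have hpinchH : (P_E * Δε * P_E + P_O * Δε * P_O).IsHermitian := by
    rw [hpinchε]; exact hΔ0H.add (isHermitian_realSmul hNH ε)
  have hub : traceNorm (P_E * Δε * P_E + P_O * Δε * P_O) ≤ traceNorm Δε :=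
    traceNorm_pinch_le hΔεH hPE.1 hPE.2 hPO.1 hPO.2 hsum
  refine ⟨by linarith, ?_⟩
  -- upper bound
  have ha : traceNorm Δε ≤ traceNorm Δ0 + |ε| * traceNorm M := by
    rw [hΔε]
    calc traceNorm (Δ0 + (ε : ℂ) • M)
        ≤ traceNorm Δ0 + traceNorm ((ε : ℂ) • M) :=
          traceNorm_triangle hΔ0H (isHermitian_realSmul hMH ε)
      _ = traceNorm Δ0 + |ε| * traceNorm M := by rw [traceNorm_real_smul]
  have hsplit : Δ0 = (P_E * Δε * P_E + P_O * Δε * P_O)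
      + ((-ε : ℝ) : ℂ) • (P_E * M * P_E + P_O * M * P_O) := by
    rw [hpinchε, Complex.ofReal_neg, neg_smul]
    abel
  have hb : traceNorm Δ0 ≤ traceNorm (P_E * Δε * P_E + P_O * Δε * P_O)
      + |ε| * traceNorm (P_E * M * P_E + P_O * M * P_O) := by
    calc traceNorm Δ0
        = traceNorm ((P_E * Δε * P_E + P_O * Δε * P_O)
            + ((-ε : ℝ) : ℂ) • (P_E * M * P_E + P_O * M * P_O)) := by rw [← hsplit]
      _ ≤ traceNorm (P_E * Δε * P_E + P_O * Δε * P_O)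
            + traceNorm (((-ε : ℝ) : ℂ) • (P_E * M * P_E + P_O * M * P_O)) :=
          traceNorm_triangle hpinchH (isHermitian_realSmul hNH (-ε))
      _ = _ := by rw [traceNorm_real_smul, abs_neg]
  have : (traceNorm Δε - traceNorm (P_E * Δε * P_E + P_O * Δε * P_O)) / 2
      ≤ (|ε| * traceNorm M + |ε| * traceNorm (P_E * M * P_E + P_O * M * P_O)) / 2 := by
    linarith
  calc (traceNorm Δε - traceNorm (P_E * Δε * P_E + P_O * Δε * P_O)) / 2
      ≤ (|ε| * traceNorm M + |ε| * traceNorm (P_E * M * P_E + P_O * M * P_O)) / 2 := this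
    _ = κ * |ε| := by rw [hκ]; ring
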